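/- Fix a nonnegative integer n and define ψ_n(x,z) = (e^{zx}/(1+e^{-2x})^n) · ∑_{m=0}^n e^{-2mx} binom(n,m) ∏_{j=1}^m (z+n+1-j)/(z-j), for real x and complex z not equal to 1,...,n. Then ψ_n satisfies the Schrödinger equation with Pöschl–Teller potential: ∂²ψ_n/∂x² + (n(n+1)/cosh²(x))·ψ_n − z²·ψ_n = 0. -/

import Mathlib

open Finset


namespace PoschlTeller

noncomputable def aa (n m : ℕ) (z : ℂ) : ℂ := z + 2*n - 2*m
noncomputable def cc (n : ℕ) (z : ℂ) (m : ℕ) : ℂ :=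
  (n.choose m : ℂ) * ∏ j ∈ Finset.Icc 1 m, (z + n + 1 - j) / (z - j)
noncomputable def EE (n m : ℕ) (z : ℂ) (x : ℝ) : ℂ := Complex.exp (aa n m z * x)
noncomputable def gg (n : ℕ) (z : ℂ) (x : ℝ) : ℂ :=
  ∑ m ∈ Finset.range (n+1), cc n z m * EE n m z x
noncomputable def gg1 (n : ℕ) (z : ℂ) (x : ℝ) : ℂ :=
  ∑ m ∈ Finset.range (n+1), cc n z m * (aa n m z * EE n m z x)
noncomputable def gg2 (n : ℕ) (z : ℂ) (x : ℝ) : ℂ :=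
  ∑ m ∈ Finset.range (n+1), cc n z m * (aa n m z * (aa n m z * EE n m z x))
noncomputable def PP (x : ℝ) : ℂ := 1 + Complex.exp (2*x)
noncomputable def QQ (x : ℝ) : ℂ := 2 * Complex.exp (2*x)
noncomputable def N1 (n : ℕ) (z : ℂ) (x : ℝ) : ℂ := gg1 n z x * PP x - (n:ℂ) * gg n z x * QQ x
noncomputable def N1' (n : ℕ) (z : ℂ) (x : ℝ) : ℂ :=
  (gg2 n z x * PP x + gg1 n z x * QQ x) - (((n:ℂ) * gg1 n z x) * QQ x + ((n:ℂ) * gg n z x) * (2 * QQ x))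
noncomputable def ψ1 (n : ℕ) (z : ℂ) (x : ℝ) : ℂ := N1 n z x / PP x ^ (n+1)
noncomputable def ψ2 (n : ℕ) (z : ℂ) (x : ℝ) : ℂ :=
  (N1' n z x * PP x - (↑(n+1) : ℂ) * N1 n z x * QQ x) / PP x ^ (n+1+1)

lemma PP_eq (x : ℝ) : PP x = ((1 + Real.exp (2*x) : ℝ) : ℂ) := by
  unfold PP; push_cast [← Complex.ofReal_exp]; norm_num

lemma PP_ne (x : ℝ) : PP x ≠ 0 := by
  rw [PP_eq]
  exact_mod_cast ne_of_gt (by positivity)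

lemma expDeriv (c : ℂ) (x : ℝ) :
    HasDerivAt (fun x : ℝ => Complex.exp (c * x)) (c * Complex.exp (c * x)) x := by
  have h1 : HasDerivAt (fun w : ℂ => Complex.exp (c * w)) (c * Complex.exp (c * x)) (x : ℂ) := by
    simpa [mul_comm, Function.comp_def] using (Complex.hasDerivAt_exp (c * x)).comp (x:ℂ) ((hasDerivAt_id (x:ℂ)).const_mul c)
  exact h1.comp_ofReal

lemma hE (n m : ℕ) (z : ℂ) (x : ℝ) : HasDerivAt (EE n m z) (aa n m z * EE n m z x) x :=
  expDeriv _ x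

lemma hg (n : ℕ) (z : ℂ) (x : ℝ) : HasDerivAt (gg n z) (gg1 n z x) x :=
  HasDerivAt.fun_sum fun m _ => (hE n m z x).const_mul (cc n z m)

lemma hg1 (n : ℕ) (z : ℂ) (x : ℝ) : HasDerivAt (gg1 n z) (gg2 n z x) x :=
  HasDerivAt.fun_sum fun m _ => ((hE n m z x).const_mul (aa n m z)).const_mul (cc n z m)

lemma hP (x : ℝ) : HasDerivAt PP (QQ x) x := (expDeriv 2 x).const_add 1

lemma hQ (x : ℝ) : HasDerivAt QQ (2 * QQ x) x := (expDeriv 2 x).const_mul 2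

lemma aux (N : ℕ) (a b p q : ℂ) (hp : p ≠ 0) :
    (a * p ^ N - b * (↑N * p ^ (N-1) * q)) / (p ^ N) ^ 2 = (a * p - ↑N * b * q) / p ^ (N+1) := by
  cases N with
  | zero => simp [hp]
  | succ k =>
    have hpk : p ^ k ≠ 0 := pow_ne_zero _ hp
    simp only [Nat.add_sub_cancel]
    field_simp
    ring

lemma crec (n : ℕ) (z : ℂ) (hz : ∀ j ∈ Finset.Icc 1 n, z ≠ (j : ℂ)) (m : ℕ) (hm : m < n) :
    cc n z (m+1) * (((m:ℂ)+1) * (z - ((m:ℂ)+1)))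
      = cc n z m * (((n:ℂ)-m)*(z+(n:ℂ)-m)) := by
  unfold cc
  have hne : z - ((m:ℂ)+1) ≠ 0 := by
    have := hz (m+1) (by simp; omega)
    intro h; apply this; push_cast; linear_combination h
  have hc : ((n.choose (m+1) : ℂ)) * ((m:ℂ)+1) = (n.choose m : ℂ) * ((n:ℂ) - m) := by
    have h2 := congrArg (Nat.cast (R := ℂ)) (Nat.choose_succ_right_eq n m)
    push_cast at h2
    rw [Nat.cast_sub hm.le] at h2
    push_cast at h2
    linear_combination h2
  rw [Finset.prod_Icc_succ_top (by omega)]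
  have harg : (z + ↑n + 1 - ↑(m+1)) / (z - ↑(m+1)) = (z + ↑n - ↑m) / (z - ((m:ℂ)+1)) := by
    push_cast; ring_nf
  rw [harg]
  have hcanc : (z + ↑n - ↑m) / (z - ((m:ℂ)+1)) * (z - ((m:ℂ)+1)) = z + ↑n - ↑m :=
    div_mul_cancel₀ _ hne
  linear_combination ((n.choose (m+1) : ℂ)) * (∏ j ∈ Icc 1 m, (z + ↑n + 1 - ↑j) / (z - ↑j)) * ((m:ℂ)+1) * hcanc
    + (∏ j ∈ Icc 1 m, (z + ↑n + 1 - ↑j) / (z - ↑j)) * (z + ↑n - ↑m) * hc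

lemma keysum (n : ℕ) (z : ℂ) (hz : ∀ j ∈ Finset.Icc 1 n, z ≠ (j : ℂ)) (x : ℝ) :
    ∑ m ∈ Finset.range (n+1), cc n z m * (((n:ℂ)-m)*(z+(n:ℂ)-m)) * EE n m z x
      = ∑ m ∈ Finset.range (n+1), cc n z m * ((m:ℂ)*(z-(m:ℂ))) * EE n m z x * Complex.exp (2*x) := by
  rw [Finset.sum_range_succ, Finset.sum_range_succ']
  have h1 : cc n z n * (((n:ℂ)-n)*(z+(n:ℂ)-n)) * EE n n z x = 0 := by simp
  have h2 : cc n z 0 * (((0:ℕ):ℂ)*(z-((0:ℕ):ℂ))) * EE n 0 z x * Complex.exp (2*x) = 0 := by simp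
  rw [h1, h2, add_zero, add_zero]
  refine Finset.sum_congr rfl fun m hm => ?_
  have hmn : m < n := Finset.mem_range.mp hm
  have hexp : EE n (m+1) z x * Complex.exp (2*x) = EE n m z x := by
    unfold EE
    rw [← Complex.exp_add]
    congr 1
    unfold aa; push_cast; ring
  have := crec n z hz m hmn
  calc cc n z m * (((n:ℂ)-m)*(z+(n:ℂ)-m)) * EE n m z x
      = (cc n z (m+1) * (((m:ℂ)+1) * (z - ((m:ℂ)+1)))) * EE n m z x := by rw [this]
    _ = cc n z (m+1) * ((((m+1):ℕ):ℂ)*(z-(((m+1):ℕ):ℂ))) * EE n (m+1) z x * Complex.exp (2*x) := by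
        rw [mul_assoc _ (EE n (m+1) z x) _, hexp]; push_cast; ring

lemma master (n : ℕ) (z : ℂ) (hz : ∀ j ∈ Finset.Icc 1 n, z ≠ (j : ℂ)) (x : ℝ) :
    N1' n z x * PP x - (↑(n+1) : ℂ) * N1 n z x * QQ x
      + 2*(n:ℂ)*((n:ℂ)+1)*QQ x*gg n z x - z^2*(gg n z x * (PP x)^2) = 0 := by
  have step : N1' n z x * PP x - (↑(n+1) : ℂ) * N1 n z x * QQ x
      + 2*(n:ℂ)*((n:ℂ)+1)*QQ x*gg n z x - z^2*(gg n z x * (PP x)^2)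
      = 4 * PP x * ((∑ m ∈ Finset.range (n+1), cc n z m * (((n:ℂ)-m)*(z+(n:ℂ)-m)) * EE n m z x)
        - ∑ m ∈ Finset.range (n+1), cc n z m * ((m:ℂ)*(z-(m:ℂ))) * EE n m z x * Complex.exp (2*x)) := by
    simp only [N1', N1, gg, gg1, gg2, PP, QQ, aa, Finset.sum_mul, Finset.mul_sum,
      ← Finset.sum_sub_distrib, ← Finset.sum_add_distrib]
    refine Finset.sum_congr rfl fun m hm => ?_
    push_cast
    ring
  rw [step, keysum n z hz x]
  ring

end PoschlTeller

namespace PoschlTeller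

lemma hψderiv (n : ℕ) (z : ℂ) (x : ℝ) :
    HasDerivAt (fun t => gg n z t / PP t ^ n) (ψ1 n z x) x := by
  have hPn : HasDerivAt (fun t => PP t ^ n) ((n:ℂ) * PP x ^ (n-1) * QQ x) x := (hasDerivAt_pow n (PP x)).comp x (hP x)
  have h := (hg n z x).div hPn (pow_ne_zero n (PP_ne x))
  rw [aux n (gg1 n z x) (gg n z x) (PP x) (QQ x) (PP_ne x)] at h
  exact h

lemma hψ1deriv (n : ℕ) (z : ℂ) (x : ℝ) : HasDerivAt (ψ1 n z) (ψ2 n z x) x := by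
  have hN : HasDerivAt (fun t => gg1 n z t * PP t - (n:ℂ) * gg n z t * QQ t) (N1' n z x) x :=
    ((hg1 n z x).mul (hP x)).sub (((hg n z x).const_mul (n:ℂ)).mul (hQ x))
  have hPn : HasDerivAt (fun t => PP t ^ (n+1)) ((↑(n+1):ℂ) * PP x ^ (n+1-1) * QQ x) x := (hasDerivAt_pow (n+1) (PP x)).comp x (hP x)
  have h := hN.div hPn (pow_ne_zero _ (PP_ne x))
  rw [aux (n+1) (N1' n z x) (gg1 n z x * PP x - ↑n * gg n z x * QQ x) (PP x) (QQ x) (PP_ne x)] at h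
  exact h

lemma conv (n : ℕ) (z : ℂ) (x : ℝ) :
    Complex.exp (z * x) / ((1 + Complex.exp (-2 * x)) ^ n) *
        ∑ m ∈ Finset.range (n + 1), Complex.exp (-2 * m * x) * (n.choose m : ℂ) *
          ∏ j ∈ Finset.Icc 1 m, (z + n + 1 - j) / (z - j) = gg n z x / PP x ^ n := by
  have hD1 : (1 + Complex.exp (-2 * (x:ℂ))) = Complex.exp (-2 * (x:ℂ)) * PP x := by
    unfold PP
    rw [mul_add, mul_one, ← Complex.exp_add]
    norm_num [add_comm]
  rw [hD1, mul_pow, ← Complex.exp_nat_mul]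
  rw [div_mul_eq_mul_div, div_eq_div_iff
    (mul_ne_zero (Complex.exp_ne_zero _) (pow_ne_zero _ (PP_ne x))) (pow_ne_zero _ (PP_ne x))]
  unfold gg EE cc
  rw [Finset.mul_sum, Finset.sum_mul, Finset.sum_mul]
  refine Finset.sum_congr rfl fun m hm => ?_
  have hexp : Complex.exp (z*x) * Complex.exp (-2*(m:ℂ)*x)
      = Complex.exp (aa n m z * x) * Complex.exp ((n:ℂ)*(-2*(x:ℂ))) := by
    rw [← Complex.exp_add, ← Complex.exp_add]
    congr 1
    unfold aa; push_cast; ring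
  linear_combination ((n.choose m : ℂ) * (∏ j ∈ Icc 1 m, (z + ↑n + 1 - ↑j) / (z - ↑j)) * PP x ^ n) * hexp

lemma coshsq (x : ℝ) : ((Real.cosh x : ℂ))^2 * (4 * Complex.exp (2*(x:ℂ))) = (PP x)^2 := by
  have h : ((Real.cosh x : ℂ)) = (Complex.exp x + Complex.exp (-x))/2 := by
    rw [Real.cosh_eq]; push_cast [← Complex.ofReal_exp]; norm_num
  have h2 : Complex.exp (2*(x:ℂ)) = Complex.exp x * Complex.exp x := by
    rw [← Complex.exp_add]; ring_nf
  have h3 : Complex.exp (-(x:ℂ)) = (Complex.exp x)⁻¹ := Complex.exp_neg x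
  have hne : Complex.exp (x:ℂ) ≠ 0 := Complex.exp_ne_zero _
  rw [PP, h, h2, h3]
  field_simp
  ring

lemma coshne (x : ℝ) : ((Real.cosh x : ℂ)) ≠ 0 := by
  exact_mod_cast ne_of_gt (Real.cosh_pos x)

end PoschlTeller


open PoschlTeller in
/-- `ψ_n(x,z) = (e^{zx}/(1+e^{-2x})^n) ∑_{m=0}^n e^{-2mx} binom(n,m)
∏_{j=1}^m (z+n+1-j)/(z-j)` satisfies the Schrödinger equation with Pöschl–Teller potential:
`ψ'' + (n(n+1)/cosh² x)·ψ − z²·ψ = 0`. -/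
theorem stmt2 (n : ℕ) (z : ℂ) (hz : ∀ j ∈ Finset.Icc 1 n, z ≠ (j : ℂ))
    (ψ : ℝ → ℂ)
    (hψ : ∀ x : ℝ, ψ x = Complex.exp (z * x) / ((1 + Complex.exp (-2 * x)) ^ n) *
        ∑ m ∈ Finset.range (n + 1), Complex.exp (-2 * m * x) * (n.choose m : ℂ) *
          ∏ j ∈ Finset.Icc 1 m, (z + n + 1 - j) / (z - j)) :
    ∀ x : ℝ, deriv (deriv ψ) x + ((n : ℂ) * (n + 1) / (Real.cosh x : ℂ) ^ 2) * ψ x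
        - z ^ 2 * ψ x = 0 := by
  have hψfun : ψ = fun t => gg n z t / PP t ^ n := funext fun t => (hψ t).trans (conv n z t)
  have hd1 : deriv ψ = fun t => ψ1 n z t := funext fun t => by
    rw [hψfun]; exact (hψderiv n z t).deriv
  have hd2 : ∀ t, deriv (deriv ψ) t = ψ2 n z t := fun t => by
    rw [hd1]; exact (hψ1deriv n z t).deriv
  intro x
  rw [hd2 x, hψfun]
  have hM := master n z hz x
  have hcsq := coshsq x
  have hPx := PP_ne x
  have e1 : ((n:ℂ) * ((n:ℂ) + 1) / ((Real.cosh x : ℂ))^2) * (gg n z x / PP x ^ n)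
      = (2*(n:ℂ)*((n:ℂ)+1)*QQ x*gg n z x) / PP x ^ (n+1+1) := by
    rw [div_mul_div_comm, div_eq_div_iff
      (mul_ne_zero (pow_ne_zero _ (coshne x)) (pow_ne_zero _ hPx)) (pow_ne_zero _ hPx)]
    have hpow : PP x ^ (n+1+1) = PP x ^ n * PP x ^ 2 := by ring
    rw [hpow]
    unfold QQ
    linear_combination (-(n:ℂ)*((n:ℂ)+1)*gg n z x*PP x^n) * hcsq
  have e2 : z^2 * (gg n z x / PP x ^ n) = (z^2 * (gg n z x * (PP x)^2)) / PP x ^ (n+1+1) := by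
    have hpow : PP x ^ (n+1+1) = PP x ^ n * PP x ^ 2 := by ring
    rw [hpow]
    field_simp
  rw [e1, e2]
  show ψ2 n z x + _ - _ = 0
  unfold ψ2
  rw [← add_div, ← sub_div, div_eq_zero_iff]
  exact Or.inl (by linear_combination hM)
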